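/- Every continuous Γ-equivariant linear map T : V → W between linear subshifts V ⊆ (Γ → 𝔽₂)^r and W ⊆ (Γ → 𝔽₂)^s is given by right multiplication by an s × r matrix with entries in the group algebra 𝔽₂[Γ]: there exists M ∈ Mat_{s×r}(𝔽₂[Γ]) such that T(v) = T_M(v) for all v ∈ V. -/

import Mathlib

open Filter Topology Pointwise

instance : TopologicalSpace (ZMod 2) := ⊥
instance : DiscreteTopology (ZMod 2) := ⟨rfl⟩

variable {G : Type*} [Group G] [DecidableEq G]

/-- Left translation action on functions. -/
def ltv (M : Type*) (γ : G) (f : G → M) : G → M := fun δ => f (γ⁻¹ * δ)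

/-- A `Γ`-invariant linear subspace. -/
def InvariantSub (M : Type*) [AddCommGroup M] [Module (ZMod 2) M]
    (W : Submodule (ZMod 2) (G → M)) : Prop :=
  ∀ γ : G, ∀ f ∈ W, ltv M γ f ∈ W

/-- The space of restrictions of elements of `W` to `Λ`. -/
noncomputable def resSpace {M : Type*} [AddCommGroup M] [Module (ZMod 2) M]
    (W : Submodule (ZMod 2) (G → M)) (Λ : Finset G) :
    Submodule (ZMod 2) (↥Λ → M) :=
  W.map (LinearMap.funLeft (ZMod 2) M (Subtype.val : ↥Λ → G))

/-- The entropy of a `Γ`-invariant linear subspace, along a Følner exhaustion. -/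
noncomputable def entropy {M : Type*} [AddCommGroup M] [Module (ZMod 2) M]
    (F : ℕ → Finset G) (W : Submodule (ZMod 2) (G → M)) : ℝ :=
  Filter.limsup
    (fun n => (Module.finrank (ZMod 2) ↥(resSpace W (F n)) : ℝ) / (F n).card) atTop

/-- `S` is a finite symmetric generating set containing `1`. -/
def SymmGen (S : Finset G) : Prop :=
  (1 : G) ∈ S ∧ (∀ s ∈ S, s⁻¹ ∈ S) ∧ Subgroup.closure (S : Set G) = ⊤

/-- A Følner exhaustion with respect to the word metric of `S`:
`S ^ r * F n` is the `r`-neighbourhood of `F n`. -/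
structure FolnerSeq (S : Finset G) (F : ℕ → Finset G) : Prop where
  one_mem : (1 : G) ∈ F 0
  mono : Monotone F
  exhaust : ∀ g : G, ∃ n, g ∈ F n
  folner : ∀ r : ℕ,
    Tendsto (fun n => (((S ^ r * F n) \ F n).card : ℝ) / (F n).card) atTop (𝓝 0)

/-- Right multiplication of a column vector `v ∈ (Γ → 𝔽₂)^r` by an `s × r` matrix with
entries in the group algebra `𝔽₂[Γ]`:
`(T_M v)_i(x) = Σ_j Σ_γ (M i j)(γ) ⬝ v_j(xγ)`. -/
noncomputable def matMul {r s : ℕ}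
    (M : Matrix (Fin s) (Fin r) (MonoidAlgebra (ZMod 2) G))
    (v : G → Fin r → ZMod 2) : G → Fin s → ZMod 2 :=
  fun x i => ∑ j, Finsupp.sum (M i j).coeff (fun γ c => c * v (x * γ) j)

/-- Every continuous `Γ`-equivariant linear map `T : V → W` between linear
subshifts is given by right multiplication by an `s × r` matrix over `𝔽₂[Γ]`. -/
theorem equivariant_map_is_matrix (r s : ℕ)
    (V : Submodule (ZMod 2) (G → Fin r → ZMod 2))
    (W : Submodule (ZMod 2) (G → Fin s → ZMod 2))
    (hVc : IsClosed (V : Set (G → Fin r → ZMod 2)))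
    (hVi : InvariantSub (Fin r → ZMod 2) V)
    (hWc : IsClosed (W : Set (G → Fin s → ZMod 2)))
    (hWi : InvariantSub (Fin s → ZMod 2) W)
    (T : ↥V →ₗ[ZMod 2] (G → Fin s → ZMod 2))
    (hTW : ∀ v : ↥V, T v ∈ W)
    (hTcont : Continuous T)
    (hTequi : ∀ γ : G, ∀ v : ↥V,
      T ⟨ltv _ γ ↑v, hVi γ ↑v v.2⟩ = ltv _ γ (T v)) :
    ∃ M : Matrix (Fin s) (Fin r) (MonoidAlgebra (ZMod 2) G),
      ∀ v : ↥V, T v = matMul M ↑v := by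
  classical
  -- the evaluation-at-1 map
  set e : ↥V →ₗ[ZMod 2] (Fin s → ZMod 2) :=
    (LinearMap.proj (1 : G)).comp T with he
  have hecont : Continuous e := (continuous_apply (1 : G)).comp hTcont
  -- find a finite window
  have hopen : IsOpen (e ⁻¹' {0}) := (isOpen_discrete _).preimage hecont
  rw [isOpen_induced_iff] at hopen
  obtain ⟨U, hU, hUe⟩ := hopen
  have hU0 : (0 : G → Fin r → ZMod 2) ∈ U := by
    have : ((0 : ↥V) : G → Fin r → ZMod 2) ∈ U := by
      have : (0 : ↥V) ∈ e ⁻¹' {0} := by simp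
      rw [← hUe] at this; exact this
    simpa using this
  have hUnhds : U ∈ 𝓝 (0 : G → Fin r → ZMod 2) := hU.mem_nhds hU0
  rw [nhds_pi, Filter.mem_pi] at hUnhds
  obtain ⟨I, hIfin, t, ht, htU⟩ := hUnhds
  set Λ : Finset G := hIfin.toFinset with hΛ
  -- key vanishing property
  have key : ∀ v : ↥V, (∀ γ ∈ Λ, (v : G → Fin r → ZMod 2) γ = 0) → e v = 0 := by
    intro v hv
    have hmem : (v : G → Fin r → ZMod 2) ∈ U := by
      apply htU
      intro γ hγ
      have h0 : (v : G → Fin r → ZMod 2) γ = 0 := hv γ (hIfin.mem_toFinset.2 hγ)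
      rw [h0]
      exact mem_of_mem_nhds (ht γ)
    have : v ∈ e ⁻¹' {0} := by rw [← hUe]; exact hmem
    simpa using this
  -- restriction map
  set π : ↥V →ₗ[ZMod 2] (↥Λ → Fin r → ZMod 2) :=
    (LinearMap.funLeft (ZMod 2) (Fin r → ZMod 2) (Subtype.val : ↥Λ → G)).comp V.subtype
    with hπ
  have hker : LinearMap.ker π ≤ LinearMap.ker e := by
    intro v hv
    rw [LinearMap.mem_ker] at hv ⊢
    apply key
    intro γ hγ
    exact congrFun hv ⟨γ, hγ⟩
  -- factor e through π
  set ebar : (↥V ⧸ LinearMap.ker π) →ₗ[ZMod 2] (Fin s → ZMod 2) :=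
    (LinearMap.ker π).liftQ e hker with hebar
  set φ₀ : ↥(LinearMap.range π) →ₗ[ZMod 2] (Fin s → ZMod 2) :=
    ebar.comp (π.quotKerEquivRange.symm : ↥(LinearMap.range π) →ₗ[ZMod 2] _) with hφ₀
  obtain ⟨φ, hφ⟩ := φ₀.exists_extend
  have hfact : ∀ v : ↥V, φ (π v) = e v := by
    intro v
    have h1 : π v ∈ LinearMap.range π := LinearMap.mem_range_self π v
    have h2 : φ (π v) = φ₀ ⟨π v, h1⟩ := by
      rw [← hφ]; rfl
    rw [h2, hφ₀]
    simp only [LinearMap.comp_apply]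
    have h3 : π.quotKerEquivRange (Submodule.Quotient.mk v) = ⟨π v, h1⟩ := by
      rfl
    rw [← h3, LinearEquiv.coe_coe, LinearEquiv.symm_apply_apply]
    exact Submodule.liftQ_apply _ _ _
  -- the basis elements
  set b : ↥Λ → Fin r → (↥Λ → Fin r → ZMod 2) :=
    fun γ j => Pi.single γ (Pi.single j 1) with hb
  -- expansion of φ
  have hexp : ∀ w : ↥Λ → Fin r → ZMod 2, ∀ i : Fin s,
      φ w i = ∑ γ : ↥Λ, ∑ j : Fin r, w γ j * φ (b γ j) i := by
    intro w i
    have hw : w = ∑ γ : ↥Λ, ∑ j : Fin r, w γ j • b γ j := by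
      funext γ' j'
      simp only [hb, Finset.sum_apply, Pi.smul_apply, Pi.single_apply, smul_eq_mul]
      rw [Finset.sum_eq_single γ']
      · rw [Finset.sum_eq_single j'] <;> simp +contextual [eq_comm]
      · intro γ'' _ hne
        apply Finset.sum_eq_zero
        intro j _
        simp [Ne.symm hne]
      · simp
    conv_lhs => rw [hw]
    rw [map_sum]
    simp only [map_sum, map_smul, Finset.sum_apply, Pi.smul_apply, smul_eq_mul]
  -- define the matrix
  refine ⟨fun i j => MonoidAlgebra.ofCoeff (∑ γ : ↥Λ, Finsupp.single (γ : G) (φ (b γ j) i)), ?_⟩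
  intro v
  funext x i
  -- evaluate T v at x via equivariance
  have hTvx : T v x = e ⟨ltv _ x⁻¹ ↑v, hVi x⁻¹ ↑v v.2⟩ := by
    have := hTequi x⁻¹ v
    have h2 := congrFun this (1 : G)
    rw [he]
    simp only [LinearMap.comp_apply, LinearMap.proj_apply]
    rw [h2]
    simp [ltv]
  have hπval : π ⟨ltv _ x⁻¹ ↑v, hVi x⁻¹ ↑v v.2⟩ =
      fun γ : ↥Λ => (v : G → Fin r → ZMod 2) (x * γ) := by
    funext γ
    simp [hπ, ltv, LinearMap.funLeft, mul_assoc]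
  have : T v x i = ∑ γ : ↥Λ, ∑ j : Fin r,
      (v : G → Fin r → ZMod 2) (x * γ) j * φ (b γ j) i := by
    rw [hTvx, ← hfact, hπval, hexp]
  rw [this]
  -- compute matMul
  simp only [matMul, MonoidAlgebra.coeff_ofCoeff]
  rw [Finset.sum_comm]
  congr 1
  funext j
  rw [← Finsupp.sum_finset_sum_index (fun γ => by simp) (fun γ c₁ c₂ => by ring)]
  congr 1
  funext γ
  rw [Finsupp.sum_single_index (by simp)]
  ring
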